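/- arXiv:1301.5447 — 2 statements merged into one kernel-verified Lean document; each statement's English description precedes it below -/
import Mathlib

section
/- Let γ > 0 and b > 0. For every f ∈ C([0,∞]) and every t > 0, the function P_t^{γ,b} f is continuous on [0,∞) and admits a finite limit at +∞ (i.e. P_t^{γ,b} f ∈ C([0,∞])), ‖P_t^{γ,b} f‖_∞ ≤ ‖f‖_∞, and lim_{t → 0⁺} sup_{x ≥ 0} |P_t^{γ,b} f(x) − f(x)| = 0. -/
open MeasureTheory

/-- The semigroup `P_t^{γ,b}` (case `b > 0`):
`P_t^{γ,b} f(x) = e^{−x/(γt)} ∑_{m=0}^∞ (x/(γt))^m (1/(m! Γ(m + b/γ)))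
  ∫_0^∞ e^{−z} z^{m + b/γ − 1} f(γzt) dz`. -/
noncomputable def Psem (γ b t : ℝ) (f : ℝ → ℝ) (x : ℝ) : ℝ :=
  Real.exp (-x / (γ * t)) *
    ∑' m : ℕ, (x / (γ * t)) ^ m * (1 / ((m.factorial : ℝ) * Real.Gamma ((m : ℝ) + b / γ))) *
      ∫ z in Set.Ioi (0:ℝ), Real.exp (-z) * z ^ ((m : ℝ) + b / γ - 1) * f (γ * z * t)

/-- The supremum norm of `f` over `[0, ∞)`. -/
noncomputable def supIci (f : ℝ → ℝ) : ℝ := ⨆ y : Set.Ici (0:ℝ), |f (y : ℝ)|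

section Aux

open Set Filter

private lemma exp_tsum (u : ℝ) : ∑' n : ℕ, u ^ n / (n.factorial : ℝ) = Real.exp u := by
  rw [Real.exp_eq_exp_ℝ, NormedSpace.exp_eq_tsum_div]

private lemma shift1 (u : ℝ) (k : ℕ) :
    ((k + 1 : ℕ) : ℝ) * (u ^ (k + 1) / ((k + 1).factorial : ℝ))
      = u * (u ^ k / (k.factorial : ℝ)) := by
  rw [Nat.factorial_succ]
  have h1 : (k.factorial : ℝ) ≠ 0 := Nat.cast_ne_zero.2 k.factorial_ne_zero
  have h2 : ((k : ℝ) + 1) ≠ 0 := by positivity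
  push_cast
  field_simp
  ring

private lemma summable1 (u : ℝ) :
    Summable (fun n : ℕ => (n : ℝ) * (u ^ n / (n.factorial : ℝ))) := by
  apply (summable_nat_add_iff 1).mp
  exact ((Real.summable_pow_div_factorial u).mul_left u).congr fun n => (shift1 u n).symm

private lemma tsum1 (u : ℝ) :
    ∑' n : ℕ, (n : ℝ) * (u ^ n / (n.factorial : ℝ)) = u * Real.exp u := by
  rw [Summable.tsum_eq_zero_add (summable1 u)]
  simp only [Nat.cast_zero, zero_mul, zero_add]
  rw [tsum_congr (shift1 u), tsum_mul_left, exp_tsum]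

private lemma shift2 (u : ℝ) (k : ℕ) :
    ((k + 1 : ℕ) : ℝ) * (((k + 1 : ℕ) : ℝ) - 1) * (u ^ (k + 1) / ((k + 1).factorial : ℝ))
      = u * ((k : ℝ) * (u ^ k / (k.factorial : ℝ))) := by
  rw [Nat.factorial_succ]
  have h1 : (k.factorial : ℝ) ≠ 0 := Nat.cast_ne_zero.2 k.factorial_ne_zero
  have h2 : ((k : ℝ) + 1) ≠ 0 := by positivity
  push_cast
  field_simp
  ring

private lemma summable2 (u : ℝ) :
    Summable (fun n : ℕ => (n : ℝ) * ((n : ℝ) - 1) * (u ^ n / (n.factorial : ℝ))) := by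
  apply (summable_nat_add_iff 1).mp
  exact ((summable1 u).mul_left u).congr fun n => (shift2 u n).symm

private lemma tsum2 (u : ℝ) :
    ∑' n : ℕ, (n : ℝ) * ((n : ℝ) - 1) * (u ^ n / (n.factorial : ℝ)) = u ^ 2 * Real.exp u := by
  rw [Summable.tsum_eq_zero_add (summable2 u)]
  simp only [Nat.cast_zero, zero_mul, zero_add]
  rw [tsum_congr (shift2 u), tsum_mul_left, tsum1]
  ring

private lemma summable_q (u β : ℝ) :
    Summable (fun m : ℕ =>
      u ^ m / (m.factorial : ℝ) * ((((m : ℝ) + β) - u) ^ 2 + ((m : ℝ) + β))) := by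
  have h := ((summable2 u).add ((summable1 u).mul_left (2 * (β - u) + 2))).add
    ((Real.summable_pow_div_factorial u).mul_left ((β - u) ^ 2 + β))
  exact h.congr fun m => by ring

private lemma tsum_q (u β : ℝ) :
    ∑' m : ℕ, u ^ m / (m.factorial : ℝ) * ((((m : ℝ) + β) - u) ^ 2 + ((m : ℝ) + β))
      = (2 * u + β + β ^ 2) * Real.exp u := by
  have e1 : (fun m : ℕ =>
      u ^ m / (m.factorial : ℝ) * ((((m : ℝ) + β) - u) ^ 2 + ((m : ℝ) + β)))
      = fun m : ℕ =>
        ((m : ℝ) * ((m : ℝ) - 1) * (u ^ m / (m.factorial : ℝ))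
          + (2 * (β - u) + 2) * ((m : ℝ) * (u ^ m / (m.factorial : ℝ))))
        + ((β - u) ^ 2 + β) * (u ^ m / (m.factorial : ℝ)) := by
    funext m; ring
  rw [e1, Summable.tsum_add ((summable2 u).add (((summable1 u).mul_left _)))
      ((Real.summable_pow_div_factorial u).mul_left _),
    Summable.tsum_add (summable2 u) ((summable1 u).mul_left _),
    tsum_mul_left, tsum_mul_left, tsum1, tsum2, exp_tsum]
  ring

-- E s z := Real.exp (-z) * z ^ (s-1) (rpow)

private lemma J0_int (s : ℝ) (hs : 0 < s) :
    IntegrableOn (fun z : ℝ => Real.exp (-z) * z ^ (s - 1)) (Ioi 0) :=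
  Real.GammaIntegral_convergent hs

private lemma J0_val (s : ℝ) (hs : 0 < s) :
    ∫ z in Ioi (0 : ℝ), Real.exp (-z) * z ^ (s - 1) = Real.Gamma s :=
  (Real.Gamma_eq_integral hs).symm

private lemma shift_eq (s : ℝ) : ∀ z ∈ Ioi (0 : ℝ),
    Real.exp (-z) * z ^ ((s + 1) - 1) = Real.exp (-z) * z ^ (s - 1) * z := by
  intro z hz
  have hz0 : (z : ℝ) ≠ 0 := ne_of_gt hz
  have : (s + 1) - 1 = (s - 1) + 1 := by ring
  rw [this, Real.rpow_add_one hz0, mul_assoc]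

private lemma J1_int (s : ℝ) (hs : 0 < s) :
    IntegrableOn (fun z : ℝ => Real.exp (-z) * z ^ (s - 1) * z) (Ioi 0) :=
  (J0_int (s + 1) (by linarith)).congr_fun (shift_eq s) measurableSet_Ioi

private lemma J1_val (s : ℝ) (hs : 0 < s) :
    ∫ z in Ioi (0 : ℝ), Real.exp (-z) * z ^ (s - 1) * z = s * Real.Gamma s := by
  rw [← setIntegral_congr_fun measurableSet_Ioi (shift_eq s), J0_val (s + 1) (by linarith),
    Real.Gamma_add_one (ne_of_gt hs)]

private lemma shift_eq2 (s : ℝ) : ∀ z ∈ Ioi (0 : ℝ),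
    Real.exp (-z) * z ^ ((s + 1) - 1) * z = Real.exp (-z) * z ^ (s - 1) * z * z := by
  intro z hz
  rw [shift_eq s z hz]

private lemma J2_int (s : ℝ) (hs : 0 < s) :
    IntegrableOn (fun z : ℝ => Real.exp (-z) * z ^ (s - 1) * z * z) (Ioi 0) :=
  (J1_int (s + 1) (by linarith)).congr_fun (shift_eq2 s) measurableSet_Ioi

private lemma J2_val (s : ℝ) (hs : 0 < s) :
    ∫ z in Ioi (0 : ℝ), Real.exp (-z) * z ^ (s - 1) * z * z
      = s * (s + 1) * Real.Gamma s := by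
  rw [← setIntegral_congr_fun measurableSet_Ioi (shift_eq2 s), J1_val (s + 1) (by linarith),
    Real.Gamma_add_one (ne_of_gt hs)]
  ring

private lemma quad_decomp (s c x K ε : ℝ) (z : ℝ) :
    Real.exp (-z) * z ^ (s - 1) * (ε + K * (c * z - x) ^ 2)
      = ((ε + K * x ^ 2) * (Real.exp (-z) * z ^ (s - 1))
          + (-(2 * K * c * x)) * (Real.exp (-z) * z ^ (s - 1) * z))
        + (K * c ^ 2) * (Real.exp (-z) * z ^ (s - 1) * z * z) := by ring

private lemma quad_integrable (s c x K ε : ℝ) (hs : 0 < s) :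
    IntegrableOn (fun z : ℝ => Real.exp (-z) * z ^ (s - 1) * (ε + K * (c * z - x) ^ 2))
      (Ioi 0) := by
  have h : IntegrableOn (fun z : ℝ =>
      ((ε + K * x ^ 2) * (Real.exp (-z) * z ^ (s - 1))
        + (-(2 * K * c * x)) * (Real.exp (-z) * z ^ (s - 1) * z))
      + (K * c ^ 2) * (Real.exp (-z) * z ^ (s - 1) * z * z)) (Ioi 0) :=
    (((J0_int s hs).const_mul _).add ((J1_int s hs).const_mul _)).add
      ((J2_int s hs).const_mul _)
  exact h.congr_fun (fun z _ => (quad_decomp s c x K ε z).symm) measurableSet_Ioi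

private lemma quad_integral (s c x K ε : ℝ) (hs : 0 < s) :
    ∫ z in Ioi (0 : ℝ), Real.exp (-z) * z ^ (s - 1) * (ε + K * (c * z - x) ^ 2)
      = (ε + K * (c ^ 2 * (s * (s + 1)) - 2 * c * x * s + x ^ 2)) * Real.Gamma s := by
  have h0 : IntegrableOn (fun z : ℝ =>
      (ε + K * x ^ 2) * (Real.exp (-z) * z ^ (s - 1))) (Ioi 0) := (J0_int s hs).const_mul _
  have h1 : IntegrableOn (fun z : ℝ =>
      (-(2 * K * c * x)) * (Real.exp (-z) * z ^ (s - 1) * z)) (Ioi 0) :=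
    (J1_int s hs).const_mul _
  have h2 : IntegrableOn (fun z : ℝ =>
      (K * c ^ 2) * (Real.exp (-z) * z ^ (s - 1) * z * z)) (Ioi 0) := (J2_int s hs).const_mul _
  have h01 : IntegrableOn (fun z : ℝ =>
      (ε + K * x ^ 2) * (Real.exp (-z) * z ^ (s - 1))
        + (-(2 * K * c * x)) * (Real.exp (-z) * z ^ (s - 1) * z)) (Ioi 0) := h0.add h1
  rw [setIntegral_congr_fun measurableSet_Ioi (fun z _ => quad_decomp s c x K ε z)]
  rw [integral_add h01 h2, integral_add h0 h1]
  rw [integral_const_mul, integral_const_mul, integral_const_mul, J0_val s hs, J1_val s hs,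
    J2_val s hs]
  ring

noncomputable def Iker (γ b t : ℝ) (f : ℝ → ℝ) (m : ℕ) : ℝ :=
  ∫ z in Set.Ioi (0:ℝ), Real.exp (-z) * z ^ ((m : ℝ) + b / γ - 1) * f (γ * z * t)

noncomputable def cker (γ b t : ℝ) (f : ℝ → ℝ) (m : ℕ) : ℝ :=
  Iker γ b t f m / Real.Gamma ((m : ℝ) + b / γ)

private lemma hs_pos (γ b : ℝ) (hγ : 0 < γ) (hb : 0 < b) (m : ℕ) : 0 < (m : ℝ) + b / γ :=
  add_pos_of_nonneg_of_pos (Nat.cast_nonneg m) (div_pos hb hγ)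

private lemma E_nonneg (s : ℝ) {z : ℝ} (hz : 0 < z) : 0 ≤ Real.exp (-z) * z ^ (s - 1) :=
  mul_nonneg (Real.exp_pos _).le (Real.rpow_nonneg hz.le _)

private lemma cont_kernel (γ t : ℝ) (f : ℝ → ℝ) (hγ : 0 < γ) (ht : 0 < t)
    (hf : ContinuousOn f (Set.Ici 0)) (s : ℝ) :
    ContinuousOn (fun z : ℝ => Real.exp (-z) * z ^ (s - 1) * f (γ * z * t)) (Ioi 0) := by
  apply ContinuousOn.mul
  · apply ContinuousOn.mul
    · exact (Real.continuous_exp.comp continuous_neg).continuousOn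
    · exact fun z hz =>
        (Real.continuousAt_rpow_const z (s - 1) (Or.inl (ne_of_gt hz))).continuousWithinAt
  · refine hf.comp ((continuous_const.mul continuous_id).mul continuous_const).continuousOn ?_
    intro z hz
    exact le_of_lt (mul_pos (mul_pos hγ hz) ht)

private lemma kernel_integrable (γ t : ℝ) (f : ℝ → ℝ) (M : ℝ) (hγ : 0 < γ) (ht : 0 < t)
    (hf : ContinuousOn f (Set.Ici 0)) (hM : ∀ y, 0 ≤ y → |f y| ≤ M) (s : ℝ) (hs : 0 < s) :
    IntegrableOn (fun z : ℝ => Real.exp (-z) * z ^ (s - 1) * f (γ * z * t)) (Ioi 0) := by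
  refine Integrable.mono' ((J0_int s hs).const_mul M)
    ((cont_kernel γ t f hγ ht hf s).aestronglyMeasurable measurableSet_Ioi) ?_
  refine (ae_restrict_iff' measurableSet_Ioi).2 (Filter.Eventually.of_forall fun z hz => ?_)
  have h1 : 0 ≤ Real.exp (-z) * z ^ (s - 1) := E_nonneg s hz
  rw [Real.norm_eq_abs, abs_mul, abs_of_nonneg h1]
  calc Real.exp (-z) * z ^ (s - 1) * |f (γ * z * t)|
      ≤ Real.exp (-z) * z ^ (s - 1) * M :=
        mul_le_mul_of_nonneg_left (hM _ (le_of_lt (mul_pos (mul_pos hγ hz) ht))) h1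
    _ = M * (Real.exp (-z) * z ^ (s - 1)) := by ring

private lemma cker_abs_le (γ b t : ℝ) (f : ℝ → ℝ) (M : ℝ) (hγ : 0 < γ) (hb : 0 < b)
    (ht : 0 < t) (hf : ContinuousOn f (Set.Ici 0)) (hM : ∀ y, 0 ≤ y → |f y| ≤ M) (m : ℕ) :
    |cker γ b t f m| ≤ M := by
  set s := (m : ℝ) + b / γ with hsdef
  have hs : 0 < s := hs_pos γ b hγ hb m
  have hΓ : 0 < Real.Gamma s := Real.Gamma_pos_of_pos hs
  have hI : |Iker γ b t f m| ≤ M * Real.Gamma s := by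
    rw [show M * Real.Gamma s = ∫ z in Ioi (0:ℝ), M * (Real.exp (-z) * z ^ (s - 1)) by
      rw [integral_const_mul, J0_val s hs]]
    rw [← Real.norm_eq_abs]
    refine (norm_integral_le_integral_norm _).trans ?_
    refine setIntegral_mono_on
      ((kernel_integrable γ t f M hγ ht hf hM s hs).norm) ((J0_int s hs).const_mul M)
      measurableSet_Ioi fun z hz => ?_
    have h1 : 0 ≤ Real.exp (-z) * z ^ (s - 1) := E_nonneg s hz
    rw [Real.norm_eq_abs, abs_mul, abs_of_nonneg h1]
    calc Real.exp (-z) * z ^ (s - 1) * |f (γ * z * t)|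
        ≤ Real.exp (-z) * z ^ (s - 1) * M :=
          mul_le_mul_of_nonneg_left (hM _ (le_of_lt (mul_pos (mul_pos hγ hz) ht))) h1
      _ = M * (Real.exp (-z) * z ^ (s - 1)) := by ring
  have : |cker γ b t f m| = |Iker γ b t f m| / Real.Gamma s := by
    rw [cker, abs_div, abs_of_pos hΓ]
  rw [this]
  rw [div_le_iff₀ hΓ]
  calc |Iker γ b t f m| ≤ M * Real.Gamma s := hI
    _ = M * Real.Gamma s := rfl

private lemma cker_sub_general (γ b t : ℝ) (f : ℝ → ℝ) (M : ℝ) (hγ : 0 < γ) (hb : 0 < b)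
    (ht : 0 < t) (hf : ContinuousOn f (Set.Ici 0)) (hM : ∀ y, 0 ≤ y → |f y| ≤ M) (m : ℕ)
    (r : ℝ) (h : ℝ → ℝ) (hr : ∀ a, 0 ≤ a → |f a - r| ≤ h a)
    (hint : IntegrableOn
      (fun z : ℝ => Real.exp (-z) * z ^ ((m : ℝ) + b / γ - 1) * h (γ * z * t)) (Ioi 0)) :
    |cker γ b t f m - r| ≤
      (∫ z in Ioi (0:ℝ), Real.exp (-z) * z ^ ((m : ℝ) + b / γ - 1) * h (γ * z * t))
        / Real.Gamma ((m : ℝ) + b / γ) := by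
  set s := (m : ℝ) + b / γ with hsdef
  have hs : 0 < s := hs_pos γ b hγ hb m
  have hΓ : 0 < Real.Gamma s := Real.Gamma_pos_of_pos hs
  have hfi := kernel_integrable γ t f M hγ ht hf hM s hs
  have h1 : ∫ z in Ioi (0:ℝ),
      (Real.exp (-z) * z ^ (s - 1) * f (γ * z * t) - r * (Real.exp (-z) * z ^ (s - 1)))
      = Iker γ b t f m - r * Real.Gamma s := by
    rw [integral_sub hfi ((J0_int s hs).const_mul r), integral_const_mul, J0_val s hs]
    rfl
  have h2 : |Iker γ b t f m - r * Real.Gamma s|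
      ≤ ∫ z in Ioi (0:ℝ), Real.exp (-z) * z ^ (s - 1) * h (γ * z * t) := by
    rw [← h1, ← Real.norm_eq_abs]
    refine (norm_integral_le_integral_norm _).trans ?_
    refine setIntegral_mono_on ((hfi.sub ((J0_int s hs).const_mul r)).norm) hint
      measurableSet_Ioi fun z hz => ?_
    have hE : 0 ≤ Real.exp (-z) * z ^ (s - 1) := E_nonneg s hz
    have e1 : Real.exp (-z) * z ^ (s - 1) * f (γ * z * t) - r * (Real.exp (-z) * z ^ (s - 1))
        = Real.exp (-z) * z ^ (s - 1) * (f (γ * z * t) - r) := by ring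
    rw [e1, Real.norm_eq_abs, abs_mul, abs_of_nonneg hE]
    exact mul_le_mul_of_nonneg_left (hr _ (le_of_lt (mul_pos (mul_pos hγ hz) ht))) hE
  have e2 : cker γ b t f m - r = (Iker γ b t f m - r * Real.Gamma s) / Real.Gamma s := by
    rw [cker, eq_div_iff (ne_of_gt hΓ), sub_mul, div_mul_cancel₀ _ (ne_of_gt hΓ)]
  rw [e2, abs_div, abs_of_pos hΓ]
  exact div_le_div_of_nonneg_right h2 hΓ.le

private lemma cker_quad_bound (γ b t : ℝ) (f : ℝ → ℝ) (M : ℝ) (hγ : 0 < γ) (hb : 0 < b)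
    (ht : 0 < t) (hf : ContinuousOn f (Set.Ici 0)) (hM : ∀ y, 0 ≤ y → |f y| ≤ M) (m : ℕ)
    (r x ε C : ℝ) (hr : ∀ a, 0 ≤ a → |f a - r| ≤ ε + C * (a - x) ^ 2) :
    |cker γ b t f m - r| ≤ ε + C * (γ * t) ^ 2 *
      (((((m : ℝ) + b / γ)) - x / (γ * t)) ^ 2 + ((m : ℝ) + b / γ)) := by
  set s := (m : ℝ) + b / γ with hsdef
  have hs : 0 < s := hs_pos γ b hγ hb m
  have hΓ : 0 < Real.Gamma s := Real.Gamma_pos_of_pos hs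
  have hgt : γ * t ≠ 0 := ne_of_gt (mul_pos hγ ht)
  have hcongr : ∀ z ∈ Ioi (0:ℝ),
      Real.exp (-z) * z ^ (s - 1) * (ε + C * (γ * z * t - x) ^ 2)
        = Real.exp (-z) * z ^ (s - 1) * (ε + C * ((γ * t) * z - x) ^ 2) := by
    intro z _; ring_nf
  have hint : IntegrableOn
      (fun z : ℝ => Real.exp (-z) * z ^ (s - 1) * (ε + C * (γ * z * t - x) ^ 2)) (Ioi 0) :=
    (quad_integrable s (γ * t) x C ε hs).congr_fun
      (fun z hz => (hcongr z hz).symm) measurableSet_Ioi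
  have h := cker_sub_general γ b t f M hγ hb ht hf hM m r
    (fun a => ε + C * (a - x) ^ 2) hr hint
  rw [setIntegral_congr_fun measurableSet_Ioi hcongr, quad_integral s (γ * t) x C ε hs] at h
  refine h.trans (le_of_eq ?_)
  rw [mul_div_assoc, div_self (ne_of_gt hΓ), mul_one]
  field_simp
  ring

private lemma cker_tail_bound (γ b t : ℝ) (f : ℝ → ℝ) (M : ℝ) (hγ : 0 < γ) (hb : 0 < b)
    (ht : 0 < t) (hf : ContinuousOn f (Set.Ici 0)) (hM : ∀ y, 0 ≤ y → |f y| ≤ M) (m : ℕ)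
    (hm : 2 < (m : ℝ) + b / γ) (l ε C : ℝ) (hε : 0 ≤ ε) (hC : 0 ≤ C)
    (hr : ∀ a, 0 ≤ a → |f a - l| ≤ ε + C / (1 + a) ^ 2) :
    |cker γ b t f m - l| ≤ ε + (C / (γ * t) ^ 2) *
      (1 / ((((m : ℝ) + b / γ) - 1) * (((m : ℝ) + b / γ) - 2))) := by
  set s := (m : ℝ) + b / γ with hsdef
  have hs : 0 < s := hs_pos γ b hγ hb m
  have hΓ : 0 < Real.Gamma s := Real.Gamma_pos_of_pos hs
  have hgt : (0:ℝ) < γ * t := mul_pos hγ ht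
  -- pointwise bound of the h-kernel by an integrable function
  have hptwise : ∀ z ∈ Ioi (0:ℝ),
      Real.exp (-z) * z ^ (s - 1) * (ε + C / (1 + γ * z * t) ^ 2)
        ≤ ε * (Real.exp (-z) * z ^ (s - 1))
          + (C / (γ * t) ^ 2) * (Real.exp (-z) * z ^ ((s - 2) - 1)) := by
    intro z hz
    have hz0 : (z:ℝ) ≠ 0 := ne_of_gt hz
    have hE : 0 ≤ Real.exp (-z) * z ^ (s - 1) := E_nonneg s hz
    have hzz : z ^ (s - 1) = z ^ ((s - 2) - 1) * z * z := by
      rw [show s - 1 = (((s - 2) - 1) + 1) + 1 by ring, Real.rpow_add_one hz0,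
        Real.rpow_add_one hz0]
    have ha : (0:ℝ) < γ * z * t := mul_pos (mul_pos hγ hz) ht
    have hsq : (γ * z * t) ^ 2 ≤ (1 + γ * z * t) ^ 2 := by nlinarith
    have hdivle : C / (1 + γ * z * t) ^ 2 ≤ C / (γ * z * t) ^ 2 :=
      div_le_div_of_nonneg_left hC (by positivity) hsq
    have step1 : Real.exp (-z) * z ^ (s - 1) * (ε + C / (1 + γ * z * t) ^ 2)
        ≤ Real.exp (-z) * z ^ (s - 1) * (ε + C / (γ * z * t) ^ 2) :=
      mul_le_mul_of_nonneg_left (by linarith) hE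
    refine step1.trans (le_of_eq ?_)
    rw [hzz]
    field_simp
  have hRHSint : IntegrableOn (fun z : ℝ =>
      ε * (Real.exp (-z) * z ^ (s - 1))
        + (C / (γ * t) ^ 2) * (Real.exp (-z) * z ^ ((s - 2) - 1))) (Ioi 0) :=
    ((J0_int s hs).const_mul ε).add ((J0_int (s - 2) (by linarith)).const_mul _)
  have hcont : ContinuousOn
      (fun z : ℝ => Real.exp (-z) * z ^ (s - 1) * (ε + C / (1 + γ * z * t) ^ 2)) (Ioi 0) := by
    apply ContinuousOn.mul
    · apply ContinuousOn.mul
      · exact (Real.continuous_exp.comp continuous_neg).continuousOn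
      · exact fun z hz =>
          (Real.continuousAt_rpow_const z (s - 1) (Or.inl (ne_of_gt hz))).continuousWithinAt
    · apply ContinuousOn.add continuousOn_const
      apply ContinuousOn.div continuousOn_const
      · fun_prop
      · intro z hz
        have : (0:ℝ) < γ * z * t := mul_pos (mul_pos hγ hz) ht
        positivity
  have hint : IntegrableOn
      (fun z : ℝ => Real.exp (-z) * z ^ (s - 1) * (ε + C / (1 + γ * z * t) ^ 2)) (Ioi 0) := by
    refine Integrable.mono' hRHSint (hcont.aestronglyMeasurable measurableSet_Ioi) ?_
    refine (ae_restrict_iff' measurableSet_Ioi).2 (Filter.Eventually.of_forall fun z hz => ?_)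
    have ha : (0:ℝ) < γ * z * t := mul_pos (mul_pos hγ hz) ht
    have hE : 0 ≤ Real.exp (-z) * z ^ (s - 1) := E_nonneg s hz
    rw [Real.norm_eq_abs, abs_of_nonneg (by positivity)]
    exact hptwise z hz
  have h := cker_sub_general γ b t f M hγ hb ht hf hM m l
    (fun a => ε + C / (1 + a) ^ 2) hr hint
  have hIle : (∫ z in Ioi (0:ℝ),
      Real.exp (-z) * z ^ (s - 1) * (ε + C / (1 + γ * z * t) ^ 2))
      ≤ ε * Real.Gamma s + (C / (γ * t) ^ 2) * Real.Gamma (s - 2) := by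
    rw [show ε * Real.Gamma s + (C / (γ * t) ^ 2) * Real.Gamma (s - 2)
        = ∫ z in Ioi (0:ℝ), (ε * (Real.exp (-z) * z ^ (s - 1))
            + (C / (γ * t) ^ 2) * (Real.exp (-z) * z ^ ((s - 2) - 1))) by
      rw [integral_add ((J0_int s hs).const_mul ε) ((J0_int (s-2) (by linarith)).const_mul _),
        integral_const_mul, integral_const_mul, J0_val s hs, J0_val (s-2) (by linarith)]]
    exact setIntegral_mono_on hint hRHSint measurableSet_Ioi hptwise
  have hne1 : s - 1 ≠ 0 := ne_of_gt (by linarith)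
  have hne2 : s - 2 ≠ 0 := ne_of_gt (by linarith)
  have hΓ2 : 0 < Real.Gamma (s - 2) := Real.Gamma_pos_of_pos (by linarith)
  have hΓratio : Real.Gamma (s - 2) / Real.Gamma s = 1 / ((s - 1) * (s - 2)) := by
    have e1 : Real.Gamma s = (s - 1) * Real.Gamma (s - 1) := by
      nth_rewrite 1 [show s = (s - 1) + 1 by ring]
      rw [Real.Gamma_add_one hne1]
    have e2 : Real.Gamma (s - 1) = (s - 2) * Real.Gamma (s - 2) := by
      nth_rewrite 1 [show s - 1 = (s - 2) + 1 by ring]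
      rw [Real.Gamma_add_one hne2]
    rw [e1, e2]
    field_simp
  calc |cker γ b t f m - l|
      ≤ (∫ z in Ioi (0:ℝ),
          Real.exp (-z) * z ^ (s - 1) * (ε + C / (1 + γ * z * t) ^ 2)) / Real.Gamma s := h
    _ ≤ (ε * Real.Gamma s + (C / (γ * t) ^ 2) * Real.Gamma (s - 2)) / Real.Gamma s :=
        div_le_div_of_nonneg_right hIle hΓ.le
    _ = ε + (C / (γ * t) ^ 2) * (Real.Gamma (s - 2) / Real.Gamma s) := by
        field_simp
    _ = ε + (C / (γ * t) ^ 2) * (1 / ((s - 1) * (s - 2))) := by rw [hΓratio]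

private lemma Psem_eq (γ b t : ℝ) (f : ℝ → ℝ) (hγ : 0 < γ) (hb : 0 < b) (x : ℝ) :
    Psem γ b t f x = Real.exp (-(x / (γ * t))) *
      ∑' m : ℕ, (x / (γ * t)) ^ m / (m.factorial : ℝ) * cker γ b t f m := by
  simp only [Psem, cker, Iker, neg_div]
  congr 1
  refine tsum_congr fun m => ?_
  have hΓ : Real.Gamma ((m : ℝ) + b / γ) ≠ 0 :=
    ne_of_gt (Real.Gamma_pos_of_pos (hs_pos γ b hγ hb m))
  have hmfac : (m.factorial : ℝ) ≠ 0 := Nat.cast_ne_zero.2 m.factorial_ne_zero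
  field_simp

set_option maxHeartbeats 1000000 in
private lemma Psem_sub_bound (γ b t : ℝ) (f : ℝ → ℝ) (M : ℝ) (hγ : 0 < γ) (hb : 0 < b)
    (ht : 0 < t) (hf : ContinuousOn f (Set.Ici 0)) (hM : ∀ y, 0 ≤ y → |f y| ≤ M)
    (x : ℝ) (hx : 0 ≤ x) (r : ℝ) (g : ℕ → ℝ)
    (hg : ∀ m, |cker γ b t f m - r| ≤ g m)
    (hgs : Summable (fun m : ℕ => (x / (γ * t)) ^ m / (m.factorial : ℝ) * g m)) :
    |Psem γ b t f x - r| ≤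
      Real.exp (-(x / (γ * t))) * ∑' m : ℕ, (x / (γ * t)) ^ m / (m.factorial : ℝ) * g m := by
  set u := x / (γ * t) with hu
  have hu0 : 0 ≤ u := div_nonneg hx (mul_pos hγ ht).le
  have hpow : ∀ m : ℕ, 0 ≤ u ^ m / (m.factorial : ℝ) := fun m =>
    div_nonneg (pow_nonneg hu0 m) (Nat.cast_nonneg _)
  have hsubS : Summable (fun m : ℕ => u ^ m / (m.factorial : ℝ) * (cker γ b t f m - r)) := by
    refine Summable.of_norm_bounded hgs fun m => ?_
    rw [Real.norm_eq_abs, abs_mul, abs_of_nonneg (hpow m)]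
    exact mul_le_mul_of_nonneg_left (hg m) (hpow m)
  have hA : Summable (fun m : ℕ => u ^ m / (m.factorial : ℝ) * cker γ b t f m) := by
    refine Summable.of_norm_bounded (g := fun m : ℕ => M * (u ^ m / (m.factorial : ℝ)))
      ((Real.summable_pow_div_factorial u).mul_left M) fun m => ?_
    rw [Real.norm_eq_abs, abs_mul, abs_of_nonneg (hpow m)]
    calc u ^ m / (m.factorial : ℝ) * |cker γ b t f m|
        ≤ u ^ m / (m.factorial : ℝ) * M :=
          mul_le_mul_of_nonneg_left (cker_abs_le γ b t f M hγ hb ht hf hM m) (hpow m)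
      _ = M * (u ^ m / (m.factorial : ℝ)) := mul_comm _ _
  have hB : Summable (fun m : ℕ => u ^ m / (m.factorial : ℝ) * r) :=
    (Real.summable_pow_div_factorial u).mul_right r
  have hcancel : Real.exp (-u) * (Real.exp u * r) = r := by
    rw [← mul_assoc, ← Real.exp_add, neg_add_cancel, Real.exp_zero, one_mul]
  have hrepr : Psem γ b t f x - r
      = Real.exp (-u) * ∑' m : ℕ, u ^ m / (m.factorial : ℝ) * (cker γ b t f m - r) := by
    rw [Psem_eq γ b t f hγ hb x]
    have h2 : ∑' m : ℕ, u ^ m / (m.factorial : ℝ) * (cker γ b t f m - r)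
        = (∑' m : ℕ, u ^ m / (m.factorial : ℝ) * cker γ b t f m)
          - ∑' m : ℕ, u ^ m / (m.factorial : ℝ) * r := by
      rw [← Summable.tsum_sub hA hB]
      exact tsum_congr fun m => by ring
    rw [h2, tsum_mul_right, exp_tsum, mul_sub, hcancel]
  rw [hrepr, abs_mul, abs_of_pos (Real.exp_pos _)]
  refine mul_le_mul_of_nonneg_left ?_ (Real.exp_pos _).le
  rw [← Real.norm_eq_abs]
  refine (norm_tsum_le_tsum_norm hsubS.abs).trans ?_
  refine Summable.tsum_le_tsum (fun m => ?_) hsubS.abs hgs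
  rw [Real.norm_eq_abs, abs_mul, abs_of_nonneg (hpow m)]
  exact mul_le_mul_of_nonneg_left (hg m) (hpow m)

private lemma Psem_abs_le (γ b t : ℝ) (f : ℝ → ℝ) (M : ℝ) (hγ : 0 < γ) (hb : 0 < b)
    (ht : 0 < t) (hf : ContinuousOn f (Set.Ici 0)) (hM : ∀ y, 0 ≤ y → |f y| ≤ M)
    (x : ℝ) (hx : 0 ≤ x) : |Psem γ b t f x| ≤ M := by
  set u := x / (γ * t) with hu
  have h := Psem_sub_bound γ b t f M hγ hb ht hf hM x hx 0 (fun _ => M)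
    (fun m => by rw [sub_zero]; exact cker_abs_le γ b t f M hγ hb ht hf hM m)
    ((Real.summable_pow_div_factorial u).mul_right M)
  rw [sub_zero] at h
  refine h.trans (le_of_eq ?_)
  rw [tsum_mul_right, exp_tsum, ← mul_assoc, ← Real.exp_add, neg_add_cancel, Real.exp_zero,
    one_mul]

private lemma Psem_key (γ b t : ℝ) (f : ℝ → ℝ) (M : ℝ) (hγ : 0 < γ) (hb : 0 < b)
    (ht : 0 < t) (hf : ContinuousOn f (Set.Ici 0)) (hM : ∀ y, 0 ≤ y → |f y| ≤ M)
    (ε C : ℝ) (hε : 0 ≤ ε) (hC : 0 ≤ C)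
    (hquad : ∀ x', 0 ≤ x' → ∀ a, 0 ≤ a →
      |f a - f x'| ≤ ε + (C / (1 + x') ^ 2) * (a - x') ^ 2)
    (x : ℝ) (hx : 0 ≤ x) :
    |Psem γ b t f x - f x| ≤ ε + C * (2 * (γ * t) + (γ * b + b ^ 2) * t ^ 2) := by
  set u := x / (γ * t) with hu
  set β := b / γ with hβ
  set K := C / (1 + x) ^ 2 with hKdef
  have hx1 : (0:ℝ) < 1 + x := by linarith
  have hK : 0 ≤ K := div_nonneg hC (by positivity)
  have hgt : (0:ℝ) < γ * t := mul_pos hγ ht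
  have hg : ∀ m : ℕ, |cker γ b t f m - f x| ≤
      ε + K * (γ * t) ^ 2 * ((((m : ℝ) + β) - u) ^ 2 + ((m : ℝ) + β)) := fun m => by
    have h := cker_quad_bound γ b t f M hγ hb ht hf hM m (f x) x ε K (hquad x hx)
    exact h.trans (le_of_eq (by ring))
  have e1 : (fun m : ℕ => u ^ m / (m.factorial : ℝ)
      * (ε + K * (γ * t) ^ 2 * ((((m : ℝ) + β) - u) ^ 2 + ((m : ℝ) + β))))
      = fun m : ℕ => ε * (u ^ m / (m.factorial : ℝ))
        + (K * (γ * t) ^ 2) * (u ^ m / (m.factorial : ℝ)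
            * ((((m : ℝ) + β) - u) ^ 2 + ((m : ℝ) + β))) := by
    funext m; ring
  have hgs : Summable (fun m : ℕ => u ^ m / (m.factorial : ℝ)
      * (ε + K * (γ * t) ^ 2 * ((((m : ℝ) + β) - u) ^ 2 + ((m : ℝ) + β)))) := by
    rw [e1]
    exact ((Real.summable_pow_div_factorial u).mul_left ε).add
      ((summable_q u β).mul_left (K * (γ * t) ^ 2))
  have h := Psem_sub_bound γ b t f M hγ hb ht hf hM x hx (f x) _ hg hgs
  have hts : ∑' m : ℕ, u ^ m / (m.factorial : ℝ)
      * (ε + K * (γ * t) ^ 2 * ((((m : ℝ) + β) - u) ^ 2 + ((m : ℝ) + β)))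
      = (ε + K * (γ * t) ^ 2 * (2 * u + β + β ^ 2)) * Real.exp u := by
    rw [e1, Summable.tsum_add ((Real.summable_pow_div_factorial u).mul_left ε)
        ((summable_q u β).mul_left (K * (γ * t) ^ 2)),
      tsum_mul_left, tsum_mul_left, exp_tsum, tsum_q]
    ring
  rw [hts, ← mul_assoc, mul_comm (Real.exp (-u)) _, mul_assoc, ← Real.exp_add,
    neg_add_cancel, Real.exp_zero, mul_one] at h
  refine h.trans ?_
  have hux : (γ * t) * u = x := by
    rw [hu, mul_div_cancel₀ _ (ne_of_gt hgt)]
  have e3 : K * (γ * t) ^ 2 * (2 * u + β + β ^ 2)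
      = C * ((2 * (γ * t) * x + (γ * b + b ^ 2) * t ^ 2) / (1 + x) ^ 2) := by
    rw [hKdef, hβ, ← hux]
    field_simp
    ring
  have e4 : (2 * (γ * t) * x + (γ * b + b ^ 2) * t ^ 2) / (1 + x) ^ 2
      ≤ 2 * (γ * t) + (γ * b + b ^ 2) * t ^ 2 := by
    rw [div_le_iff₀ (by positivity)]
    have hD : (0:ℝ) ≤ (γ * b + b ^ 2) * t ^ 2 := by positivity
    nlinarith [sq_nonneg x, mul_nonneg hgt.le hx, mul_nonneg hD hx, mul_nonneg hD (sq_nonneg x),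
      mul_nonneg (mul_nonneg hgt.le hx) hx]
  have := mul_le_mul_of_nonneg_left e4 hC
  linarith [e3 ▸ this]

private lemma exists_bound (f : ℝ → ℝ) (l : ℝ) (hf : ContinuousOn f (Set.Ici 0))
    (hl : Filter.Tendsto f Filter.atTop (nhds l)) :
    ∃ M, 0 ≤ M ∧ |l| ≤ M ∧ ∀ y, 0 ≤ y → |f y| ≤ M := by
  obtain ⟨K, hK⟩ := Metric.tendsto_atTop.1 hl 1 one_pos
  set K' := max K 0 with hK'
  obtain ⟨C, hC⟩ := (isCompact_Icc (a := (0:ℝ)) (b := K')).exists_bound_of_continuousOn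
    (hf.mono Set.Icc_subset_Ici_self)
  have hC0 : 0 ≤ C := le_trans (norm_nonneg (f 0)) (hC 0 ⟨le_refl 0, le_max_right K 0⟩)
  refine ⟨max C (|l| + 1), le_trans hC0 (le_max_left _ _),
    le_trans (by linarith [abs_nonneg l]) (le_max_right _ _), ?_⟩
  intro y hy
  by_cases hyK : y ≤ K'
  · exact le_trans (hC y ⟨hy, hyK⟩) (le_max_left _ _)
  · have hyK2 : K ≤ y := le_trans (le_max_left K 0) (le_of_not_ge hyK)
    have h1 : |f y - l| < 1 := by rw [← Real.dist_eq]; exact hK y hyK2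
    calc |f y| = |f y - l + l| := by ring_nf
      _ ≤ |f y - l| + |l| := abs_add_le _ _
      _ ≤ |l| + 1 := by linarith
      _ ≤ max C (|l| + 1) := le_max_right _ _

private lemma phi_le (a x : ℝ) (ha : 0 ≤ a) (hx : 0 ≤ x) (hax : a ≤ x) :
    a / (1 + a) ≤ x / (1 + x) := by
  rw [div_le_div_iff₀ (by linarith) (by linarith)]
  nlinarith

private lemma modulus (f : ℝ → ℝ) (l : ℝ) (hf : ContinuousOn f (Set.Ici 0))
    (hl : Filter.Tendsto f Filter.atTop (nhds l)) (ε : ℝ) (hε : 0 < ε) :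
    ∃ δ, 0 < δ ∧
      (∀ a, 0 ≤ a → ∀ x, 0 ≤ x → |a / (1 + a) - x / (1 + x)| < δ → |f a - f x| < ε) ∧
      (∀ a, 0 ≤ a → 1 / (1 + a) < δ → |f a - l| < ε) := by
  obtain ⟨K₀, hK₀⟩ := Metric.tendsto_atTop.1 hl (ε / 2) (by positivity)
  set K := max K₀ 0 with hKdef
  have hK0 : (0:ℝ) ≤ K := le_max_right _ _
  have hKprop : ∀ y, K ≤ y → |f y - l| < ε / 2 := fun y hy => by
    rw [← Real.dist_eq]; exact hK₀ y (le_trans (le_max_left _ _) hy)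
  have hUC := (isCompact_Icc (a := (0:ℝ)) (b := K + 2)).uniformContinuousOn_of_continuous
    (hf.mono Set.Icc_subset_Ici_self)
  obtain ⟨δ₁, hδ₁pos, hδ₁⟩ := Metric.uniformContinuousOn_iff.1 hUC ε hε
  have hK3 : (0:ℝ) < (K + 3) ^ 2 := by positivity
  set δ := min (1 / (K + 3) ^ 2) (δ₁ / (K + 3) ^ 2) with hδdef
  have hδpos : 0 < δ := lt_min (by positivity) (by positivity)
  have hδ1 : δ ≤ 1 / (K + 3) ^ 2 := min_le_left _ _
  have hδ2 : δ ≤ δ₁ / (K + 3) ^ 2 := min_le_right _ _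
  refine ⟨δ, hδpos, ?_, ?_⟩
  · intro a ha x hx hax
    by_cases hxK : x ≤ K + 1
    · have haK : a ≤ K + 2 := by
        by_contra hcon
        push_neg at hcon
        have h1 : (K + 2) / (1 + (K + 2)) ≤ a / (1 + a) :=
          phi_le (K + 2) a (by linarith) (by linarith) hcon.le
        have h2 : x / (1 + x) ≤ (K + 1) / (1 + (K + 1)) :=
          phi_le x (K + 1) hx (by linarith) hxK
        have h3 : (K + 2) / (1 + (K + 2)) - (K + 1) / (1 + (K + 1))
            = 1 / ((K + 3) * (K + 2)) := by
          rw [div_sub_div _ _ (by linarith : (1:ℝ) + (K+2) ≠ 0) (by linarith : (1:ℝ) + (K+1) ≠ 0)]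
          rw [div_eq_div_iff (by nlinarith) (by nlinarith)]
          ring
        have h4 : 1 / (K + 3) ^ 2 < 1 / ((K + 3) * (K + 2)) := by
          rw [div_lt_div_iff₀ hK3 (by nlinarith)]
          nlinarith
        have h5 : a / (1 + a) - x / (1 + x) < δ := (abs_lt.1 hax).2
        linarith
      have hprodpos : (0:ℝ) < (1 + a) * (1 + x) := by nlinarith
      have hprodle : (1 + a) * (1 + x) ≤ (K + 3) ^ 2 := by nlinarith
      have hφdiff : a / (1 + a) - x / (1 + x) = (a - x) / ((1 + a) * (1 + x)) := by
        field_simp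
        ring
      have hax2 : |a - x| < δ₁ := by
        have e1 : |a - x| = |a / (1 + a) - x / (1 + x)| * ((1 + a) * (1 + x)) := by
          rw [hφdiff, abs_div, abs_of_pos hprodpos, div_mul_cancel₀ _ (ne_of_gt hprodpos)]
        calc |a - x| = |a / (1 + a) - x / (1 + x)| * ((1 + a) * (1 + x)) := e1
          _ ≤ |a / (1 + a) - x / (1 + x)| * (K + 3) ^ 2 :=
              mul_le_mul_of_nonneg_left hprodle (abs_nonneg _)
          _ < δ * (K + 3) ^ 2 := by
              exact mul_lt_mul_of_pos_right hax hK3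
          _ ≤ (δ₁ / (K + 3) ^ 2) * (K + 3) ^ 2 := mul_le_mul_of_nonneg_right hδ2 hK3.le
          _ = δ₁ := div_mul_cancel₀ _ (ne_of_gt hK3)
      have := hδ₁ a ⟨ha, by linarith⟩ x ⟨hx, by linarith⟩ (by rwa [Real.dist_eq])
      rwa [Real.dist_eq] at this
    · push_neg at hxK
      by_cases haK2 : K ≤ a
      · have h1 := hKprop a haK2
        have h2 := hKprop x (by linarith)
        calc |f a - f x| ≤ |f a - l| + |l - f x| := abs_sub_le _ _ _
          _ = |f a - l| + |f x - l| := by rw [abs_sub_comm l (f x)]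
          _ < ε := by linarith
      · push_neg at haK2
        exfalso
        have h1 : a / (1 + a) ≤ K / (1 + K) := phi_le a K ha hK0 haK2.le
        have h2 : (K + 1) / (1 + (K + 1)) ≤ x / (1 + x) :=
          phi_le (K + 1) x (by linarith) (by linarith) hxK.le
        have h3 : (K + 1) / (1 + (K + 1)) - K / (1 + K) = 1 / ((K + 2) * (K + 1)) := by
          rw [div_sub_div _ _ (by linarith : (1:ℝ) + (K+1) ≠ 0) (by linarith : (1:ℝ) + K ≠ 0)]
          rw [div_eq_div_iff (by nlinarith) (by nlinarith)]
          ring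
        have h4 : 1 / (K + 3) ^ 2 < 1 / ((K + 2) * (K + 1)) := by
          rw [div_lt_div_iff₀ hK3 (by nlinarith)]
          nlinarith
        have h5 : x / (1 + x) - a / (1 + a) < δ := by
          have := (abs_lt.1 hax).1
          linarith
        linarith
  · intro a ha h2
    have h3 : 1 / (1 + a) < 1 / (K + 3) ^ 2 := lt_of_lt_of_le h2 hδ1
    have h4 : (K + 3) ^ 2 < 1 + a := by
      rw [div_lt_div_iff₀ (by linarith) hK3] at h3
      linarith
    have h5 : K ≤ a := by nlinarith
    exact lt_trans (hKprop a h5) (by linarith)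

private lemma quad_bounds (f : ℝ → ℝ) (l M : ℝ) (hf : ContinuousOn f (Set.Ici 0))
    (hl : Filter.Tendsto f Filter.atTop (nhds l)) (hM : ∀ y, 0 ≤ y → |f y| ≤ M)
    (hlM : |l| ≤ M) (ε : ℝ) (hε : 0 < ε) :
    ∃ C, 0 ≤ C ∧
      (∀ x, 0 ≤ x → ∀ a, 0 ≤ a → |f a - f x| ≤ ε + (C / (1 + x) ^ 2) * (a - x) ^ 2) ∧
      (∀ a, 0 ≤ a → |f a - l| ≤ ε + C / (1 + a) ^ 2) := by
  have hM0 : 0 ≤ M := le_trans (abs_nonneg (f 0)) (hM 0 le_rfl)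
  obtain ⟨δ, hδ, h1, h2⟩ := modulus f l hf hl ε hε
  refine ⟨2 * M / δ ^ 2, by positivity, ?_, ?_⟩
  · intro x hx a ha
    have hx1 : (0:ℝ) < 1 + x := by linarith
    have ha1 : (0:ℝ) < 1 + a := by linarith
    by_cases hcase : |a / (1 + a) - x / (1 + x)| < δ
    · have := h1 a ha x hx hcase
      have hnn : 0 ≤ (2 * M / δ ^ 2 / (1 + x) ^ 2) * (a - x) ^ 2 := by positivity
      linarith
    · push_neg at hcase
      have hMM : |f a - f x| ≤ 2 * M := by
        calc |f a - f x| ≤ |f a| + |f x| := abs_sub _ _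
          _ ≤ 2 * M := by
              have := hM a ha; have := hM x hx; linarith
      have hδsq : δ ^ 2 ≤ (a / (1 + a) - x / (1 + x)) ^ 2 := by
        rw [← sq_abs (a / (1 + a) - x / (1 + x))]
        exact pow_le_pow_left₀ hδ.le hcase 2
      have hφsq : (a / (1 + a) - x / (1 + x)) ^ 2 ≤ (a - x) ^ 2 / (1 + x) ^ 2 := by
        have hφdiff : a / (1 + a) - x / (1 + x) = (a - x) / ((1 + a) * (1 + x)) := by
          field_simp; ring
        rw [hφdiff, div_pow, mul_pow]
        rw [div_le_div_iff₀ (by positivity) (by positivity)]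
        have h1a : (1:ℝ) ≤ (1 + a) ^ 2 := by nlinarith
        nlinarith [mul_le_mul_of_nonneg_left h1a
          (by positivity : (0:ℝ) ≤ (a - x) ^ 2 * (1 + x) ^ 2)]
      have hfinal : 2 * M ≤ (2 * M / δ ^ 2 / (1 + x) ^ 2) * (a - x) ^ 2 := by
        have h6 : δ ^ 2 * (2 * M / δ ^ 2) ≤ ((a - x) ^ 2 / (1 + x) ^ 2) * (2 * M / δ ^ 2) :=
          mul_le_mul_of_nonneg_right (hδsq.trans hφsq) (by positivity)
        have h7 : δ ^ 2 * (2 * M / δ ^ 2) = 2 * M := by field_simp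
        have h8 : ((a - x) ^ 2 / (1 + x) ^ 2) * (2 * M / δ ^ 2)
            = (2 * M / δ ^ 2 / (1 + x) ^ 2) * (a - x) ^ 2 := by ring
        linarith
      linarith
  · intro a ha
    have ha1 : (0:ℝ) < 1 + a := by linarith
    by_cases hcase : 1 / (1 + a) < δ
    · have := h2 a ha hcase
      have hnn : 0 ≤ 2 * M / δ ^ 2 / (1 + a) ^ 2 := by positivity
      linarith
    · push_neg at hcase
      have hMM : |f a - l| ≤ 2 * M := by
        calc |f a - l| ≤ |f a| + |l| := abs_sub _ _
          _ ≤ 2 * M := by have := hM a ha; linarith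
      have hδsq : δ ^ 2 ≤ (1 / (1 + a)) ^ 2 := pow_le_pow_left₀ hδ.le hcase 2
      have hfinal : 2 * M ≤ 2 * M / δ ^ 2 / (1 + a) ^ 2 := by
        have h6 : δ ^ 2 * (2 * M / δ ^ 2) ≤ (1 / (1 + a)) ^ 2 * (2 * M / δ ^ 2) :=
          mul_le_mul_of_nonneg_right hδsq (by positivity)
        have h7 : δ ^ 2 * (2 * M / δ ^ 2) = 2 * M := by field_simp
        have h8 : (1 / (1 + a)) ^ 2 * (2 * M / δ ^ 2) = 2 * M / δ ^ 2 / (1 + a) ^ 2 := by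
          rw [div_pow, one_pow, one_div, inv_mul_eq_div]
        linarith
      linarith

private lemma Psem_continuous (γ b t : ℝ) (f : ℝ → ℝ) (M : ℝ) (hγ : 0 < γ) (hb : 0 < b)
    (ht : 0 < t) (hf : ContinuousOn f (Set.Ici 0)) (hM : ∀ y, 0 ≤ y → |f y| ≤ M) :
    Continuous (Psem γ b t f) := by
  have hM0 : 0 ≤ M := le_trans (abs_nonneg (f 0)) (hM 0 le_rfl)
  have hc : ∀ m : ℕ, |cker γ b t f m| ≤ M := cker_abs_le γ b t f M hγ hb ht hf hM
  set h : ℝ → ℝ := fun u => ∑' m : ℕ, cker γ b t f m / (m.factorial : ℝ) * u ^ m with hhdef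
  have hcont : Continuous h := by
    rw [continuous_iff_continuousAt]
    intro u₀
    set R := |u₀| + 1 with hR
    have hRpos : (0:ℝ) < R := by positivity
    have hcR : ContinuousOn h (Icc (-R) R) := by
      rw [continuousOn_iff_continuous_restrict]
      have : (Icc (-R) R).domRestrict h
          = fun u : Icc (-R) R => ∑' m : ℕ, cker γ b t f m / (m.factorial : ℝ) * (u : ℝ) ^ m :=
        rfl
      rw [this]
      refine continuous_tsum (u := fun m : ℕ => M * (R ^ m / (m.factorial : ℝ)))
        (fun m => continuous_const.mul (continuous_subtype_val.pow m))
        ((Real.summable_pow_div_factorial R).mul_left M) fun m u => ?_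
      have hu : |(u : ℝ)| ≤ R := abs_le.2 ⟨u.2.1, u.2.2⟩
      rw [Real.norm_eq_abs, abs_mul, abs_div, abs_pow]
      calc |cker γ b t f m| / |(m.factorial : ℝ)| * |(u:ℝ)| ^ m
          ≤ M / (m.factorial : ℝ) * R ^ m := by
            rw [abs_of_nonneg (Nat.cast_nonneg m.factorial : (0:ℝ) ≤ _)]
            have h1 : (0:ℝ) < (m.factorial : ℝ) := Nat.cast_pos.2 m.factorial_pos
            gcongr <;> first | exact hc m | exact hu | positivity
        _ = M * (R ^ m / (m.factorial : ℝ)) := by ring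
    exact hcR.continuousAt (Icc_mem_nhds (by linarith [neg_abs_le u₀]) (by linarith [le_abs_self u₀]))
  have heq : Psem γ b t f = fun x => Real.exp (-(x / (γ * t))) * h (x / (γ * t)) := by
    funext x
    rw [Psem_eq γ b t f hγ hb x, hhdef]
    congr 1
    exact tsum_congr fun m => by ring
  rw [heq]
  exact (Real.continuous_exp.comp (continuous_id.div_const _).neg).mul
    (hcont.comp (continuous_id.div_const _))

private lemma Psem_tendsto_atTop (γ b t : ℝ) (f : ℝ → ℝ) (M l : ℝ) (hγ : 0 < γ) (hb : 0 < b)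
    (ht : 0 < t) (hf : ContinuousOn f (Set.Ici 0)) (hM : ∀ y, 0 ≤ y → |f y| ≤ M)
    (hlM : |l| ≤ M) (hl : Filter.Tendsto f Filter.atTop (nhds l)) :
    Filter.Tendsto (Psem γ b t f) Filter.atTop (nhds l) := by
  have hM0 : 0 ≤ M := le_trans (abs_nonneg (f 0)) (hM 0 le_rfl)
  have hgt : (0:ℝ) < γ * t := mul_pos hγ ht
  rw [Metric.tendsto_atTop]
  intro ε hε
  obtain ⟨C, hC0, _, hquad2⟩ := quad_bounds f l M hf hl hM hlM (ε / 4) (by positivity)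
  -- tail bound eventually small
  have hdenom : Filter.Tendsto
      (fun m : ℕ => ((((m : ℝ) + b / γ) - 1) * (((m : ℝ) + b / γ) - 2)))
      Filter.atTop Filter.atTop := by
    have h1 : Filter.Tendsto (fun m : ℕ => (((m : ℝ) + b / γ) - 1)) Filter.atTop Filter.atTop :=
      (tendsto_atTop_add_const_right _ (b / γ - 1) tendsto_natCast_atTop_atTop).congr
        fun m => by ring
    have h2 : Filter.Tendsto (fun m : ℕ => (((m : ℝ) + b / γ) - 2)) Filter.atTop Filter.atTop :=
      (tendsto_atTop_add_const_right _ (b / γ - 2) tendsto_natCast_atTop_atTop).congr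
        fun m => by ring
    exact h1.atTop_mul_atTop₀ h2
  have htail : Filter.Tendsto (fun m : ℕ => (C / (γ * t) ^ 2) *
      (1 / ((((m : ℝ) + b / γ) - 1) * (((m : ℝ) + b / γ) - 2)))) Filter.atTop (nhds 0) := by
    have h3 : Filter.Tendsto (fun m : ℕ =>
        1 / ((((m : ℝ) + b / γ) - 1) * (((m : ℝ) + b / γ) - 2))) Filter.atTop (nhds 0) :=
      tendsto_const_nhds.div_atTop hdenom
    have := h3.const_mul (C / (γ * t) ^ 2)
    rwa [mul_zero] at this
  have hev : ∀ᶠ m : ℕ in Filter.atTop, |cker γ b t f m - l| ≤ ε / 2 := by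
    have e1 : ∀ᶠ m : ℕ in Filter.atTop, (C / (γ * t) ^ 2) *
        (1 / ((((m : ℝ) + b / γ) - 1) * (((m : ℝ) + b / γ) - 2))) < ε / 4 := by
      exact htail.eventually_lt_const (by positivity)
    have e2 : ∀ᶠ m : ℕ in Filter.atTop, 2 < (m : ℝ) + b / γ := by
      refine Filter.eventually_atTop.2 ⟨3, fun m hm => ?_⟩
      have h3 : (3 : ℝ) ≤ (m : ℝ) := by exact_mod_cast hm
      have := div_pos hb hγ
      linarith
    refine (e1.and e2).mono fun m ⟨hm1, hm2⟩ => ?_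
    have := cker_tail_bound γ b t f M hγ hb ht hf hM m hm2 l (ε / 4) C (by positivity) hC0
      hquad2
    refine this.trans ?_
    linarith
  obtain ⟨N, hN⟩ := Filter.eventually_atTop.1 hev
  -- head function tends to 0 at infinity
  set head : ℝ → ℝ := fun x => ∑ m ∈ Finset.range N,
    (2 * M / (m.factorial : ℝ)) * ((x / (γ * t)) ^ m * Real.exp (-(x / (γ * t)))) with hheaddef
  have hu : Filter.Tendsto (fun x : ℝ => x / (γ * t)) Filter.atTop Filter.atTop :=
    Filter.tendsto_id.atTop_div_const hgt
  have hhead : Filter.Tendsto head Filter.atTop (nhds 0) := by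
    rw [hheaddef]
    rw [show (0:ℝ) = ∑ m ∈ Finset.range N, (0:ℝ) by simp]
    refine tendsto_finset_sum _ fun m _ => ?_
    have h4 : Filter.Tendsto (fun x : ℝ => (x / (γ * t)) ^ m * Real.exp (-(x / (γ * t))))
        Filter.atTop (nhds 0) := (Real.tendsto_pow_mul_exp_neg_atTop_nhds_zero m).comp hu
    have := h4.const_mul (2 * M / (m.factorial : ℝ))
    rwa [mul_zero] at this
  have hheadev : ∀ᶠ x : ℝ in Filter.atTop, head x < ε / 4 :=
    hhead.eventually_lt_const (by positivity)
  obtain ⟨X, hX⟩ := Filter.eventually_atTop.1 (hheadev.and (Filter.eventually_ge_atTop (0:ℝ)))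
  refine ⟨X, fun x hx => ?_⟩
  obtain ⟨hhx, hx0⟩ := hX x hx
  set u := x / (γ * t) with hudef
  have hu0 : 0 ≤ u := div_nonneg hx0 hgt.le
  have hpow : ∀ m : ℕ, 0 ≤ u ^ m / (m.factorial : ℝ) := fun m =>
    div_nonneg (pow_nonneg hu0 m) (Nat.cast_nonneg _)
  set g : ℕ → ℝ := fun m => if m < N then 2 * M else ε / 2 with hgdef
  have hgnn : ∀ m, 0 ≤ g m := fun m => by
    rw [hgdef]; dsimp only; split_ifs
    · linarith
    · linarith
  have hgle : ∀ m, g m ≤ 2 * M + ε / 2 := fun m => by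
    rw [hgdef]; dsimp only; split_ifs
    · linarith
    · linarith
  have hg : ∀ m, |cker γ b t f m - l| ≤ g m := fun m => by
    rw [hgdef]; dsimp only; split_ifs with hmN
    · calc |cker γ b t f m - l| ≤ |cker γ b t f m| + |l| := abs_sub _ _
        _ ≤ 2 * M := by have := cker_abs_le γ b t f M hγ hb ht hf hM m; linarith
    · exact hN m (not_lt.1 hmN)
  have hgsum : Summable (fun m : ℕ => u ^ m / (m.factorial : ℝ) * g m) := by
    refine Summable.of_nonneg_of_le (fun m => mul_nonneg (hpow m) (hgnn m)) (fun m => ?_)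
      ((Real.summable_pow_div_factorial u).mul_left (2 * M + ε / 2))
    calc u ^ m / (m.factorial : ℝ) * g m ≤ u ^ m / (m.factorial : ℝ) * (2 * M + ε / 2) :=
          mul_le_mul_of_nonneg_left (hgle m) (hpow m)
      _ = (2 * M + ε / 2) * (u ^ m / (m.factorial : ℝ)) := mul_comm _ _
  have hb1 := Psem_sub_bound γ b t f M hγ hb ht hf hM x hx0 l g hg hgsum
  have hsplit := Summable.sum_add_tsum_nat_add (f := fun m : ℕ => u ^ m / (m.factorial : ℝ) * g m)
    N hgsum
  have htailval : ∑' k : ℕ, u ^ (k + N) / (((k + N).factorial : ℝ)) * g (k + N)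
      = (ε / 2) * ∑' k : ℕ, u ^ (k + N) / (((k + N).factorial : ℝ)) := by
    rw [← tsum_mul_left]
    refine tsum_congr fun k => ?_
    rw [hgdef]; dsimp only; rw [if_neg (by omega)]; ring
  have htail_le : ∑' k : ℕ, u ^ (k + N) / (((k + N).factorial : ℝ)) ≤ Real.exp u := by
    have h2 := Summable.sum_add_tsum_nat_add (f := fun m : ℕ => u ^ m / (m.factorial : ℝ)) N
      (Real.summable_pow_div_factorial u)
    have h3 : 0 ≤ ∑ i ∈ Finset.range N, u ^ i / (i.factorial : ℝ) :=
      Finset.sum_nonneg fun i _ => hpow i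
    rw [← exp_tsum]
    linarith
  have hheadval : Real.exp (-u) * ∑ m ∈ Finset.range N, u ^ m / (m.factorial : ℝ) * g m
      = head x := by
    rw [hheaddef, Finset.mul_sum]
    refine Finset.sum_congr rfl fun m hm => ?_
    rw [hgdef]; dsimp only; rw [if_pos (Finset.mem_range.1 hm), ← hudef]
    ring
  have htail2 : ∑' k : ℕ, u ^ (k + N) / (((k + N).factorial : ℝ)) * g (k + N)
      ≤ (ε / 2) * Real.exp u := by
    rw [htailval]
    exact mul_le_mul_of_nonneg_left htail_le (by positivity)
  rw [Real.dist_eq]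
  calc |Psem γ b t f x - l|
      ≤ Real.exp (-u) * ∑' m : ℕ, u ^ m / (m.factorial : ℝ) * g m := hb1
    _ = Real.exp (-u) * ((∑ m ∈ Finset.range N, u ^ m / (m.factorial : ℝ) * g m)
          + ∑' k : ℕ, u ^ (k + N) / (((k + N).factorial : ℝ)) * g (k + N)) := by
        rw [hsplit]
    _ = head x + Real.exp (-u) * ∑' k : ℕ, u ^ (k + N) / (((k + N).factorial : ℝ)) * g (k + N) := by
        rw [mul_add, hheadval]
    _ ≤ head x + Real.exp (-u) * ((ε / 2) * Real.exp u) :=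
        add_le_add_right (mul_le_mul_of_nonneg_left htail2 (Real.exp_pos _).le) _
    _ = head x + ε / 2 := by
        rw [mul_comm (ε / 2) (Real.exp u), ← mul_assoc, ← Real.exp_add, neg_add_cancel,
          Real.exp_zero, one_mul]
    _ < ε := by linarith

end Aux

/-- Let `γ > 0`, `b > 0`. For every `f ∈ C([0,∞])` and every `t > 0`, `P_t^{γ,b} f` is
continuous on `[0,∞)` with a finite limit at `+∞`, `‖P_t^{γ,b} f‖_∞ ≤ ‖f‖_∞`, and
`lim_{t → 0⁺} sup_{x ≥ 0} |P_t^{γ,b} f(x) − f(x)| = 0`. -/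
theorem stmt12 (γ b : ℝ) (hγ : 0 < γ) (hb : 0 < b) (f : ℝ → ℝ)
    (hf : ContinuousOn f (Set.Ici 0))
    (hlim : ∃ l, Filter.Tendsto f Filter.atTop (nhds l)) :
    (∀ t > (0:ℝ),
      ContinuousOn (Psem γ b t f) (Set.Ici 0) ∧
      (∃ l, Filter.Tendsto (Psem γ b t f) Filter.atTop (nhds l)) ∧
      supIci (Psem γ b t f) ≤ supIci f) ∧
    Filter.Tendsto (fun t => ⨆ x : Set.Ici (0:ℝ), |Psem γ b t f (x : ℝ) - f (x : ℝ)|)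
      (nhdsWithin 0 (Set.Ioi 0)) (nhds 0) := by
  obtain ⟨l, hl⟩ := hlim
  obtain ⟨M₀, hM₀0, hlM₀, hM₀⟩ := exists_bound f l hf hl
  haveI : Nonempty (Set.Ici (0:ℝ)) := ⟨⟨0, by norm_num⟩⟩
  have hBdd : BddAbove (Set.range fun y : Set.Ici (0:ℝ) => |f (y : ℝ)|) := by
    refine ⟨M₀, ?_⟩
    rintro v ⟨y, rfl⟩
    exact hM₀ y y.2
  have hM : ∀ y, 0 ≤ y → |f y| ≤ supIci f := fun y hy =>
    le_ciSup hBdd (⟨y, hy⟩ : Set.Ici (0:ℝ))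
  set M := supIci f with hMdef
  have hM0 : 0 ≤ M := le_trans (abs_nonneg (f 0)) (hM 0 le_rfl)
  have hlM : |l| ≤ M := by
    refine le_of_tendsto hl.abs ?_
    filter_upwards [Filter.eventually_ge_atTop (0:ℝ)] with y hy using hM y hy
  constructor
  · intro t ht
    refine ⟨(Psem_continuous γ b t f M hγ hb ht hf hM).continuousOn,
      ⟨l, Psem_tendsto_atTop γ b t f M l hγ hb ht hf hM hlM hl⟩, ?_⟩
    exact ciSup_le fun y => Psem_abs_le γ b t f M hγ hb ht hf hM y y.2
  · rw [Metric.tendsto_nhdsWithin_nhds]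
    intro ε hε
    obtain ⟨C, hC0, hquad, _⟩ := quad_bounds f l M hf hl hM hlM (ε / 2) (by positivity)
    have hBnn : (0:ℝ) ≤ γ * b + b ^ 2 := by positivity
    set E := C * (2 * γ + (γ * b + b ^ 2)) + 1 with hEdef
    have hEpos : 0 < E := by positivity
    refine ⟨min 1 (ε / (2 * E)), lt_min one_pos (by positivity), fun t ht' hdist => ?_⟩
    have ht : (0:ℝ) < t := ht'
    rw [Real.dist_eq, sub_zero, abs_of_pos ht] at hdist
    have ht1 : t < 1 := lt_of_lt_of_le hdist (min_le_left _ _)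
    have htε : t < ε / (2 * E) := lt_of_lt_of_le hdist (min_le_right _ _)
    have hkey : ∀ x : Set.Ici (0:ℝ), |Psem γ b t f (x : ℝ) - f (x : ℝ)|
        ≤ ε / 2 + C * (2 * (γ * t) + (γ * b + b ^ 2) * t ^ 2) := fun x =>
      Psem_key γ b t f M hγ hb ht hf hM (ε / 2) C (by positivity) hC0 hquad x x.2
    have hS_nonneg : 0 ≤ ⨆ x : Set.Ici (0:ℝ), |Psem γ b t f (x : ℝ) - f (x : ℝ)| :=
      Real.iSup_nonneg fun x => abs_nonneg _
    have hS_le : (⨆ x : Set.Ici (0:ℝ), |Psem γ b t f (x : ℝ) - f (x : ℝ)|)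
        ≤ ε / 2 + C * (2 * (γ * t) + (γ * b + b ^ 2) * t ^ 2) := ciSup_le hkey
    rw [Real.dist_eq, sub_zero, abs_of_nonneg hS_nonneg]
    have h1 : C * (2 * (γ * t) + (γ * b + b ^ 2) * t ^ 2) ≤ E * t := by
      rw [hEdef]
      nlinarith [mul_nonneg (mul_nonneg hC0 hBnn) (mul_nonneg ht.le (sub_nonneg.2 ht1.le)),
        mul_nonneg hC0 hBnn, ht.le]
    have h2 : E * t < E * (ε / (2 * E)) := mul_lt_mul_of_pos_left htε hEpos
    have h3 : E * (ε / (2 * E)) = ε / 2 := by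
      field_simp
    clear_value E
    linarith
end

section
/- Let γ > 0 and b ≥ 0, and let u ∈ D(A^{γ,b}). Then lim_{x → 0⁺} x·u'(x) = 0 and lim_{x → +∞} u'(x) = 0. -/
open MeasureTheory

open Set Filter Real

/-- FTC on `[a,c]`. -/
lemma my_ftc {f f' : ℝ → ℝ} {a c : ℝ} (hac : a ≤ c)
    (hf : ∀ t ∈ Icc a c, HasDerivAt f (f' t) t)
    (hcont : ContinuousOn f' (Icc a c)) :
    ∫ t in a..c, f' t = f c - f a := by
  apply intervalIntegral.integral_eq_sub_of_hasDerivAt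
  · intro t ht; exact hf t (by rwa [uIcc_of_le hac] at ht)
  · exact (hcont.mono (by rw [uIcc_of_le hac])).intervalIntegrable

/-- Log-type derivative bound. -/
lemma log_bound {f f' : ℝ → ℝ} {a c ε : ℝ} (ha : 0 < a) (hac : a ≤ c)
    (hf : ∀ t ∈ Icc a c, HasDerivAt f (f' t) t)
    (hcont : ContinuousOn f' (Icc a c))
    (hbound : ∀ t ∈ Icc a c, |f' t| ≤ ε / t) :
    |f c - f a| ≤ ε * (Real.log c - Real.log a) := by
  have hc : 0 < c := lt_of_lt_of_le ha hac
  have hint2 : IntervalIntegrable (fun t => ε / t) volume a c := by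
    apply ContinuousOn.intervalIntegrable
    rw [uIcc_of_le hac]
    exact continuousOn_const.div continuousOn_id (fun t ht => (lt_of_lt_of_le ha ht.1).ne')
  rw [← my_ftc hac hf hcont]
  calc |∫ t in a..c, f' t| ≤ ∫ t in a..c, |f' t| := by
        simpa [Real.norm_eq_abs] using
          intervalIntegral.norm_integral_le_integral_norm (f := f') (μ := volume) hac
    _ ≤ ∫ t in a..c, ε / t := by
        apply intervalIntegral.integral_mono_on hac _ hint2 hbound
        exact ((hcont.mono (by rw [uIcc_of_le hac])).norm).intervalIntegrable
    _ = ε * (Real.log c - Real.log a) := by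
        simp only [div_eq_mul_inv]
        rw [intervalIntegral.integral_const_mul, integral_inv_of_pos ha hc,
          Real.log_div hc.ne' ha.ne']

/-- rpow-type derivative bound. -/
lemma rpow_bound {f f' : ℝ → ℝ} {a c C r : ℝ} (ha : 0 < a) (hac : a ≤ c) (hr : r ≠ -1)
    (hf : ∀ t ∈ Icc a c, HasDerivAt f (f' t) t)
    (hcont : ContinuousOn f' (Icc a c))
    (hbound : ∀ t ∈ Icc a c, |f' t| ≤ C * t ^ r) :
    |f c - f a| ≤ C * ((c ^ (r+1) - a ^ (r+1)) / (r+1)) := by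
  have hcont2 : ContinuousOn (fun t : ℝ => C * t ^ r) (Icc a c) := by
    apply continuousOn_const.mul
    intro t ht
    exact (Real.continuousAt_rpow_const t r (Or.inl (lt_of_lt_of_le ha ht.1).ne')).continuousWithinAt
  have hint2 : IntervalIntegrable (fun t : ℝ => C * t ^ r) volume a c :=
    (hcont2.mono (by rw [uIcc_of_le hac])).intervalIntegrable
  rw [← my_ftc hac hf hcont]
  calc |∫ t in a..c, f' t| ≤ ∫ t in a..c, |f' t| := by
        simpa [Real.norm_eq_abs] using
          intervalIntegral.norm_integral_le_integral_norm (f := f') (μ := volume) hac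
    _ ≤ ∫ t in a..c, C * t ^ r := by
        apply intervalIntegral.integral_mono_on hac _ hint2 hbound
        exact ((hcont.mono (by rw [uIcc_of_le hac])).norm).intervalIntegrable
    _ = C * ((c ^ (r+1) - a ^ (r+1)) / (r+1)) := by
        rw [intervalIntegral.integral_const_mul, integral_rpow]
        right
        exact ⟨hr, by rw [uIcc_of_le hac]; intro h0; exact absurd ha (not_lt.2 h0.1)⟩

/-- `x v(x) → 0` at `0⁺` from `γ x v'(x) → 0`. -/
lemma key_zero {v w : ℝ → ℝ} {γ : ℝ} (hγ : 0 < γ)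
    (hvd : ∀ t ∈ Ioi (0:ℝ), HasDerivAt v (w t) t)
    (hwcont : ContinuousOn w (Ioi 0))
    (h0 : Tendsto (fun x => γ * x * w x) (nhdsWithin 0 (Ioi 0)) (nhds 0)) :
    Tendsto (fun x => x * v x) (nhdsWithin 0 (Ioi 0)) (nhds 0) := by
  have hev : ∀ᶠ x in nhdsWithin 0 (Ioi 0), |γ * x * w x| < γ := by
    have := NormedAddCommGroup.tendsto_nhds_zero.mp h0 γ hγ
    simpa only [Real.norm_eq_abs] using this
  obtain ⟨x₀, hx₀, hsub⟩ := mem_nhdsGT_iff_exists_Ioc_subset.mp hev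
  have hx₀0 : (0:ℝ) < x₀ := hx₀
  have hwb : ∀ t ∈ Ioc (0:ℝ) x₀, |w t| ≤ 1 / t := by
    intro t ht
    have h : |γ * t * w t| < γ := hsub ht
    have ht0 : 0 < t := ht.1
    rw [abs_mul, abs_mul, abs_of_pos hγ, abs_of_pos ht0] at h
    rw [le_div_iff₀ ht0]
    nlinarith [abs_nonneg (w t)]
  have hkey : ∀ x ∈ Ioc (0:ℝ) x₀, |x * v x| ≤ x * |v x₀| + (x * Real.log x₀ - x * Real.log x) := by
    intro x hx
    have hx0 : 0 < x := hx.1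
    have hvb : |v x₀ - v x| ≤ 1 * (Real.log x₀ - Real.log x) := by
      apply log_bound hx0 hx.2
      · intro t ht; exact hvd t (lt_of_lt_of_le hx0 ht.1)
      · exact hwcont.mono (fun t ht => lt_of_lt_of_le hx0 ht.1)
      · intro t ht; exact hwb t ⟨lt_of_lt_of_le hx0 ht.1, ht.2⟩
    rw [abs_mul, abs_of_pos hx0]
    have h1 : |v x| ≤ |v x₀| + (Real.log x₀ - Real.log x) := by
      have := abs_sub_abs_le_abs_sub (v x) (v x₀)
      rw [abs_sub_comm] at this
      nlinarith
    nlinarith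
  have hlim : Tendsto (fun x : ℝ => x * |v x₀| + (x * Real.log x₀ - x * Real.log x))
      (nhdsWithin 0 (Ioi 0)) (nhds 0) := by
    have h1 : Tendsto (fun x : ℝ => x * |v x₀| + (x * Real.log x₀ - x * Real.log x))
        (nhds 0) (nhds 0) := by
      have hml : Tendsto (fun x : ℝ => x * Real.log x) (nhds 0) (nhds 0) := by
        simpa using Real.continuous_mul_log.tendsto 0
      have h2 : Tendsto (fun x : ℝ => x * |v x₀| + x * Real.log x₀) (nhds 0) (nhds 0) := by
        have hc : Continuous (fun x : ℝ => x * |v x₀| + x * Real.log x₀) := by continuity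
        have := hc.tendsto (0:ℝ)
        simpa using this
      have := h2.sub hml
      simp only [sub_zero] at this
      exact this.congr (by intro x; ring)
    exact h1.mono_left nhdsWithin_le_nhds
  apply squeeze_zero_norm' _ hlim
  filter_upwards [Ioc_mem_nhdsGT_of_mem ⟨le_refl 0, hx₀0⟩] with x hx
  rw [Real.norm_eq_abs]
  exact hkey x hx

/-- `v → 0` at `+∞` when `u → l` and `γ x v'(x) → 0`. -/
lemma key_top0 {u v w : ℝ → ℝ} {γ l : ℝ} (hγ : 0 < γ)
    (hud : ∀ t ∈ Ioi (0:ℝ), HasDerivAt u (v t) t)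
    (hvd : ∀ t ∈ Ioi (0:ℝ), HasDerivAt v (w t) t)
    (hvcont : ContinuousOn v (Ioi 0)) (hwcont : ContinuousOn w (Ioi 0))
    (hl : Tendsto u atTop (nhds l))
    (hinf : Tendsto (fun x => γ * x * w x) atTop (nhds 0)) :
    Tendsto v atTop (nhds 0) := by
  rw [NormedAddCommGroup.tendsto_nhds_zero]
  intro ε hε
  have hev : ∀ᶠ x in atTop, |γ * x * w x| < γ * (ε/4) := by
    have := NormedAddCommGroup.tendsto_nhds_zero.mp hinf (γ * (ε/4)) (by positivity)
    simpa only [Real.norm_eq_abs] using this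
  obtain ⟨T₀, hT₀⟩ := eventually_atTop.mp hev
  set T := max T₀ 1 with hTdef
  have hT1 : (1:ℝ) ≤ T := le_max_right _ _
  have hT0 : (0:ℝ) < T := lt_of_lt_of_le one_pos hT1
  have hwb : ∀ t, T ≤ t → |w t| ≤ (ε/4) / t := by
    intro t ht
    have ht0 : 0 < t := lt_of_lt_of_le hT0 ht
    have h := hT₀ t (le_trans (le_max_left _ _) ht)
    rw [abs_mul, abs_mul, abs_of_pos hγ, abs_of_pos ht0] at h
    rw [le_div_iff₀ ht0]
    nlinarith [abs_nonneg (w t)]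
  -- u(2x) - u(x) → 0
  have h2x : Tendsto (fun x : ℝ => u (2*x) - u x) atTop (nhds 0) := by
    have h1 : Tendsto (fun x : ℝ => u (2*x)) atTop (nhds l) :=
      hl.comp (tendsto_id.const_mul_atTop two_pos)
    simpa using h1.sub hl
  have hU : ∀ᶠ x in atTop, |u (2*x) - u x| < ε * T / 4 := by
    have := NormedAddCommGroup.tendsto_nhds_zero.mp h2x (ε * T / 4) (by positivity)
    simpa only [Real.norm_eq_abs] using this
  filter_upwards [eventually_ge_atTop T, hU] with x hxT hxU
  have hx0 : 0 < x := lt_of_lt_of_le hT0 hxT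
  have hx2 : x ≤ 2 * x := by linarith
  -- bound |v t - v x| on [x, 2x]
  have hvdiff : ∀ t ∈ Icc x (2*x), |v t - v x| ≤ ε/4 := by
    intro t ht
    have hb : |v t - v x| ≤ (ε/4) * (Real.log t - Real.log x) := by
      apply log_bound hx0 ht.1
      · intro s hs; exact hvd s (lt_of_lt_of_le hx0 hs.1)
      · exact hwcont.mono (fun s hs => lt_of_lt_of_le hx0 hs.1)
      · intro s hs; exact hwb s (le_trans hxT hs.1)
    have hlog : Real.log t - Real.log x ≤ Real.log 2 := by
      have ht0 : 0 < t := lt_of_lt_of_le hx0 ht.1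
      have := Real.log_le_log ht0 ht.2
      rw [Real.log_mul two_ne_zero hx0.ne'] at this
      linarith
    have hlog2 : Real.log 2 ≤ 1 := by
      have := Real.log_le_sub_one_of_pos (two_pos (α := ℝ))
      linarith
    nlinarith [abs_nonneg (v t - v x)]
  -- FTC: ∫ v over [x, 2x]
  have hIcc : Icc x (2*x) ⊆ Ioi (0:ℝ) := fun s hs => lt_of_lt_of_le hx0 hs.1
  have hftc : ∫ t in x..(2*x), v t = u (2*x) - u x :=
    my_ftc hx2 (fun t ht => hud t (hIcc ht)) (hvcont.mono hIcc)
  have hvi : IntervalIntegrable v volume x (2*x) :=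
    ((hvcont.mono hIcc).mono (by rw [uIcc_of_le hx2])).intervalIntegrable
  have hsplit : ∫ t in x..(2*x), (v t - v x) = (u (2*x) - u x) - x * v x := by
    rw [intervalIntegral.integral_sub hvi intervalIntegrable_const, hftc,
      intervalIntegral.integral_const]
    have : (2*x - x) = x := by ring
    rw [this, smul_eq_mul]
  have hbint : |∫ t in x..(2*x), (v t - v x)| ≤ (ε/4) * |2*x - x| := by
    have := intervalIntegral.norm_integral_le_of_norm_le_const
      (C := ε/4) (f := fun t => v t - v x) (a := x) (b := 2*x) ?_
    · simpa [Real.norm_eq_abs] using this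
    · intro s hs
      rw [uIoc_of_le hx2] at hs
      exact (by simpa [Real.norm_eq_abs] using hvdiff s ⟨le_of_lt hs.1, hs.2⟩)
  rw [hsplit] at hbint
  have habs : |2*x - x| = x := by rw [abs_of_pos (by linarith)]; ring
  rw [habs] at hbint
  -- conclude
  have h1 : |x * v x| ≤ |u (2*x) - u x| + ε/4 * x := by
    have := abs_sub_abs_le_abs_sub (u (2*x) - u x) (x * v x)
    have h2 : |(u (2*x) - u x) - x * v x| ≤ ε/4 * x := hbint
    nlinarith [abs_sub_abs_le_abs_sub (x * v x) (u (2*x) - u x), abs_sub_comm (x * v x) (u (2*x) - u x)]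
  rw [Real.norm_eq_abs]
  rw [abs_mul, abs_of_pos hx0] at h1
  have hTx : ε * T / 4 ≤ ε * x / 4 := by nlinarith
  nlinarith [abs_nonneg (v x)]

/-- `v → 0` at `+∞` when `γ x v'(x) + b v(x) → 0`, `b > 0`. -/
lemma key_topPos {v w : ℝ → ℝ} {γ b : ℝ} (hγ : 0 < γ) (hb : 0 < b)
    (hvd : ∀ t ∈ Ioi (0:ℝ), HasDerivAt v (w t) t)
    (hvcont : ContinuousOn v (Ioi 0)) (hwcont : ContinuousOn w (Ioi 0))
    (hinf : Tendsto (fun x => γ * x * w x + b * v x) atTop (nhds 0)) :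
    Tendsto v atTop (nhds 0) := by
  set α := b / γ with hαdef
  have hα : 0 < α := div_pos hb hγ
  set g : ℝ → ℝ := fun t => t ^ α * v t with hgdef
  set g' : ℝ → ℝ := fun t => t ^ (α - 1) * ((γ * t * w t + b * v t) / γ) with hg'def
  have hgd : ∀ t ∈ Ioi (0:ℝ), HasDerivAt g (g' t) t := by
    intro t ht
    have ht0 : (0:ℝ) < t := ht
    have h1 : HasDerivAt (fun s : ℝ => s ^ α) (α * t ^ (α - 1)) t :=
      Real.hasDerivAt_rpow_const (Or.inl ht0.ne')
    have h2 := h1.mul (hvd t ht)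
    convert h2 using 1
    any_goals rfl
    have hts : t ^ α = t ^ (α - 1) * t := by
      rw [← Real.rpow_add_one ht0.ne' (α - 1)]; ring_nf
    rw [hts]
    simp only [hg'def, hαdef]
    field_simp
    ring
  have hg'cont : ContinuousOn g' (Ioi 0) := by
    apply ContinuousOn.mul
    · intro t ht
      exact (Real.continuousAt_rpow_const t (α - 1) (Or.inl (ne_of_gt ht))).continuousWithinAt
    · apply ContinuousOn.div_const
      exact ((continuousOn_const.mul continuousOn_id).mul hwcont).add (continuousOn_const.mul hvcont)
  rw [NormedAddCommGroup.tendsto_nhds_zero]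
  intro ε hε
  have hev : ∀ᶠ x in atTop, |γ * x * w x + b * v x| < γ * α * (ε/4) := by
    have := NormedAddCommGroup.tendsto_nhds_zero.mp hinf (γ * α * (ε/4)) (by positivity)
    simpa only [Real.norm_eq_abs] using this
  obtain ⟨T₀, hT₀⟩ := eventually_atTop.mp hev
  set T := max T₀ 1 with hTdef
  have hT1 : (1:ℝ) ≤ T := le_max_right _ _
  have hT0 : (0:ℝ) < T := lt_of_lt_of_le one_pos hT1
  -- bound on g' for t ≥ T
  have hg'b : ∀ t, T ≤ t → |g' t| ≤ (α * ε / 4) * t ^ (α - 1) := by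
    intro t ht
    have ht0 : 0 < t := lt_of_lt_of_le hT0 ht
    have h := hT₀ t (le_trans (le_max_left _ _) ht)
    have hrp : (0:ℝ) ≤ t ^ (α - 1) := Real.rpow_nonneg ht0.le _
    simp only [hg'def]
    rw [abs_mul, abs_of_nonneg hrp, abs_div, abs_of_pos hγ]
    have : |γ * t * w t + b * v t| / γ ≤ α * ε / 4 := by
      rw [div_le_iff₀ hγ]
      have : γ * α * (ε / 4) = α * ε / 4 * γ := by ring
      nlinarith
    nlinarith
  -- key estimate for x ≥ T
  have hgkey : ∀ x, T ≤ x → |g x| ≤ |g T| + ε/4 * x ^ α := by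
    intro x hx
    have hx0 : 0 < x := lt_of_lt_of_le hT0 hx
    have hIcc : Icc T x ⊆ Ioi (0:ℝ) := fun s hs => lt_of_lt_of_le hT0 hs.1
    have hbd : |g x - g T| ≤ (α * ε / 4) * ((x ^ (α - 1 + 1) - T ^ (α - 1 + 1)) / (α - 1 + 1)) := by
      apply rpow_bound hT0 hx (show α - 1 ≠ -1 by intro h; nlinarith)
        (fun t ht => hgd t (hIcc ht)) (hg'cont.mono hIcc)
      intro t ht
      exact hg'b t ht.1
    have hsimp : α - 1 + 1 = α := by ring
    rw [hsimp] at hbd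
    have hTα : (0:ℝ) ≤ T ^ α := Real.rpow_nonneg hT0.le _
    have h2 : |g x - g T| ≤ ε/4 * x ^ α := by
      have : (α * ε / 4) * ((x ^ α - T ^ α) / α) = ε/4 * (x ^ α - T ^ α) := by
        field_simp
      rw [this] at hbd
      nlinarith
    have := abs_sub_abs_le_abs_sub (g x) (g T)
    nlinarith
  -- x^{-α} → 0
  have hneg : Tendsto (fun x : ℝ => |g T| * x ^ (-α)) atTop (nhds 0) := by
    have := (tendsto_rpow_neg_atTop hα).const_mul (|g T|)
    simpa using this
  have hev2 : ∀ᶠ x in atTop, |g T| * x ^ (-α) < ε/4 := by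
    have := NormedAddCommGroup.tendsto_nhds_zero.mp hneg (ε/4) (by positivity)
    rw [eventually_atTop] at this ⊢
    obtain ⟨N, hN⟩ := this
    refine ⟨max N 1, fun x hx => ?_⟩
    have h := hN x (le_trans (le_max_left _ _) hx)
    have hx0 : (0:ℝ) < x := lt_of_lt_of_le one_pos (le_trans (le_max_right _ _) hx)
    rw [Real.norm_eq_abs, abs_mul, abs_of_nonneg (Real.rpow_nonneg hx0.le _), abs_abs] at h
    exact h
  filter_upwards [eventually_ge_atTop T, hev2] with x hxT h2
  have hx0 : 0 < x := lt_of_lt_of_le hT0 hxT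
  have hxα : 0 < x ^ α := Real.rpow_pos_of_pos hx0 _
  have hgx : |g x| = x ^ α * |v x| := by
    simp only [hgdef]
    rw [abs_mul, abs_of_pos hxα]
  have h1 := hgkey x hxT
  rw [hgx] at h1
  have hinv : x ^ (-α) = (x ^ α)⁻¹ := Real.rpow_neg hx0.le _
  rw [hinv] at h2
  rw [Real.norm_eq_abs]
  -- x^α * |v x| ≤ |g T| + ε/4 * x^α, and |g T| * (x^α)⁻¹ < ε/4
  have h3 : |g T| < ε/4 * x ^ α := by
    have := (div_lt_iff₀ hxα).mp (by rw [div_eq_mul_inv]; exact h2)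
    linarith [this]
  nlinarith [abs_nonneg (v x)]

/-- The first derivative of `u` on `[0,∞)` (one-sided at `0`). -/
noncomputable def d1 (u : ℝ → ℝ) : ℝ → ℝ := derivWithin u (Set.Ici 0)

/-- The second derivative of `u` on `[0,∞)` (one-sided at `0`). -/
noncomputable def d2 (u : ℝ → ℝ) : ℝ → ℝ := derivWithin (derivWithin u (Set.Ici 0)) (Set.Ici 0)

/-- `u ∈ D(A^{γ,b})`. For `b > 0`: `u` is `C¹` on `[0,∞)`, `C²` on `(0,∞)`, has a finite limit
at `+∞`, `x u''(x) → 0` as `x → 0⁺`, and `γ x u''(x) + b u'(x) → 0` as `x → +∞`.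
For `b = 0`: `u` is continuous on `[0,∞)`, `C²` on `(0,∞)`, has a finite limit at `+∞`,
`γ x u''(x) → 0` as `x → 0⁺` and as `x → +∞`. -/
def memDomain (γ b : ℝ) (u : ℝ → ℝ) : Prop :=
  (0 < b ∧ ContDiffOn ℝ 1 u (Set.Ici 0) ∧ ContDiffOn ℝ 2 u (Set.Ioi 0) ∧
    (∃ l, Filter.Tendsto u Filter.atTop (nhds l)) ∧
    Filter.Tendsto (fun x => x * d2 u x) (nhdsWithin 0 (Set.Ioi 0)) (nhds 0) ∧
    Filter.Tendsto (fun x => γ * x * d2 u x + b * d1 u x) Filter.atTop (nhds 0)) ∨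
  (b = 0 ∧ ContinuousOn u (Set.Ici 0) ∧ ContDiffOn ℝ 2 u (Set.Ioi 0) ∧
    (∃ l, Filter.Tendsto u Filter.atTop (nhds l)) ∧
    Filter.Tendsto (fun x => γ * x * d2 u x) (nhdsWithin 0 (Set.Ioi 0)) (nhds 0) ∧
    Filter.Tendsto (fun x => γ * x * d2 u x) Filter.atTop (nhds 0))

lemma d_facts {u : ℝ → ℝ} (hC2 : ContDiffOn ℝ 2 u (Set.Ioi 0)) :
    (∀ t ∈ Ioi (0:ℝ), HasDerivAt u (deriv u t) t) ∧
    (∀ t ∈ Ioi (0:ℝ), HasDerivAt (deriv u) (deriv (deriv u) t) t) ∧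
    ContinuousOn (deriv u) (Ioi 0) ∧ ContinuousOn (deriv (deriv u)) (Ioi 0) ∧
    (∀ x ∈ Ioi (0:ℝ), d1 u x = deriv u x) ∧
    (∀ x ∈ Ioi (0:ℝ), d2 u x = deriv (deriv u) x) := by
  have hvC1 : ContDiffOn ℝ 1 (deriv u) (Ioi 0) :=
    hC2.deriv_of_isOpen isOpen_Ioi (by norm_num)
  have hd1 : ∀ x ∈ Ioi (0:ℝ), d1 u x = deriv u x := fun x hx =>
    derivWithin_of_mem_nhds (Ici_mem_nhds hx)
  refine ⟨?_, ?_, hvC1.continuousOn, hvC1.continuousOn_deriv_of_isOpen isOpen_Ioi le_rfl, hd1, ?_⟩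
  · intro t ht
    exact ((hC2.differentiableOn (by norm_num)).differentiableAt
      (isOpen_Ioi.mem_nhds ht)).hasDerivAt
  · intro t ht
    exact ((hvC1.differentiableOn one_ne_zero).differentiableAt
      (isOpen_Ioi.mem_nhds ht)).hasDerivAt
  · intro x hx
    have h1 : d2 u x = deriv (d1 u) x := derivWithin_of_mem_nhds (Ici_mem_nhds hx)
    rw [h1]
    apply Filter.EventuallyEq.deriv_eq
    filter_upwards [Ioi_mem_nhds hx] with y hy using hd1 y hy

/-- Let `γ > 0`, `b ≥ 0` and `u ∈ D(A^{γ,b})`. Then `x u'(x) → 0` as `x → 0⁺` and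
`u'(x) → 0` as `x → +∞`. -/
theorem stmt14 (γ b : ℝ) (hγ : 0 < γ) (hb : 0 ≤ b) (u : ℝ → ℝ)
    (hu : memDomain γ b u) :
    Filter.Tendsto (fun x => x * d1 u x) (nhdsWithin 0 (Set.Ioi 0)) (nhds 0) ∧
    Filter.Tendsto (fun x => d1 u x) Filter.atTop (nhds 0) := by
  rcases hu with ⟨hbpos, hC1, hC2, ⟨l, hl⟩, h0, hinf⟩ | ⟨hb0, hucont, hC2, ⟨l, hl⟩, h0, hinf⟩
  · obtain ⟨hud, hvd, hvcont, hwcont, hd1, hd2⟩ := d_facts hC2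
    constructor
    · -- continuity of d1 u at 0 on Ici 0
      have hdc : ContinuousOn (d1 u) (Ici 0) :=
        hC1.continuousOn_derivWithin (uniqueDiffOn_Ici 0) le_rfl
      have h1 : Tendsto (d1 u) (nhdsWithin 0 (Ioi 0)) (nhds (d1 u 0)) :=
        (hdc 0 self_mem_Ici).mono_left (nhdsWithin_mono 0 Ioi_subset_Ici_self)
      have h2 : Tendsto (fun x : ℝ => x) (nhdsWithin 0 (Ioi 0)) (nhds 0) :=
        tendsto_id.mono_left nhdsWithin_le_nhds
      simpa using h2.mul h1
    · have hinf' : Tendsto (fun x => γ * x * deriv (deriv u) x + b * deriv u x)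
          atTop (nhds 0) := by
        apply hinf.congr'
        filter_upwards [Ioi_mem_atTop (0:ℝ)] with x hx
        rw [hd1 x hx, hd2 x hx]
      have hres := key_topPos hγ hbpos hvd hvcont hwcont hinf'
      apply hres.congr'
      filter_upwards [Ioi_mem_atTop (0:ℝ)] with x hx
      rw [hd1 x hx]
  · obtain ⟨hud, hvd, hvcont, hwcont, hd1, hd2⟩ := d_facts hC2
    constructor
    · have h0' : Tendsto (fun x => γ * x * deriv (deriv u) x)
          (nhdsWithin 0 (Ioi 0)) (nhds 0) := by
        apply h0.congr'
        filter_upwards [self_mem_nhdsWithin] with x hx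
        rw [hd2 x hx]
      have hres := key_zero hγ hvd hwcont h0'
      apply hres.congr'
      filter_upwards [self_mem_nhdsWithin] with x hx
      rw [hd1 x hx]
    · have hinf' : Tendsto (fun x => γ * x * deriv (deriv u) x) atTop (nhds 0) := by
        apply hinf.congr'
        filter_upwards [Ioi_mem_atTop (0:ℝ)] with x hx
        rw [hd2 x hx]
      have hres := key_top0 hγ hud hvd hvcont hwcont hl hinf'
      apply hres.congr'
      filter_upwards [Ioi_mem_atTop (0:ℝ)] with x hx
      rw [hd1 x hx]
end
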